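/- Suppose that for every u ∈ U and every v ∈ V there exists a coordinate c with u[c] = v[c] = w[c] = 1. Then the diameter-construction graph G(U,V,w,a) has diameter at most 4a+1; that is, for every pair of vertices y, z of G(U,V,w,a) there is a walk between y and z of length at most 4a+1. -/

import Mathlib

/-!
Diameter lower-bound construction (Theorem 3.1, "yes" case): if every `u ∈ U` and
`v ∈ V` share a coordinate `c` with `u[c] = v[c] = w[c] = 1`, then the
diameter-construction graph `G(U,V,w,a)` has diameter at most `4a+1`: every pair of
vertices is joined by a walk of length at most `4a+1`.
-/

namespace DiamConstr

variable {B P : Type*}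

/-- Vertices of a graph assembled from base vertices `B` and, for each path request
`p : P` of length `L p`, the `L p - 1` internal vertices of the path. -/
abbrev Vert (B P : Type*) (L : P → ℕ) : Type _ := B ⊕ (Σ p : P, Fin (L p - 1))

/-- `pos e0 e1 L p i z` : `z` is the `i`-th vertex along the path `p`
(whose endpoints are `e0 p` and `e1 p` and whose length is `L p`). -/
def pos (e0 e1 : P → B) (L : P → ℕ) (p : P) (i : ℕ) (z : Vert B P L) : Prop :=
  (i = 0 ∧ z = Sum.inl (e0 p)) ∨ (i = L p ∧ z = Sum.inl (e1 p)) ∨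
    (∃ h : i - 1 < L p - 1, 0 < i ∧ i < L p ∧ z = Sum.inr ⟨p, ⟨i - 1, h⟩⟩)

/-- The graph obtained from the base vertex set `B` by adding, for each `p : P`, an
internally vertex-disjoint path of length `L p` between the vertices `e0 p` and
`e1 p` (for `L p = 1` this is just an edge). -/
def pathGraph (e0 e1 : P → B) (L : P → ℕ) : SimpleGraph (Vert B P L) where
  Adj x y := x ≠ y ∧ ∃ p i, i < L p ∧
    ((pos e0 e1 L p i x ∧ pos e0 e1 L p (i + 1) y) ∨
     (pos e0 e1 L p i y ∧ pos e0 e1 L p (i + 1) x))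
  symm := by
    constructor
    rintro x y ⟨hne, p, i, hi, h⟩
    exact ⟨hne.symm, p, i, hi, h.symm⟩
  loopless := ⟨fun x h => h.1 rfl⟩

/-- Base (named) vertices of the diameter-construction graph `G(U,V,w,a)`:
coordinate vertices `c_U`, `c_V`, path endpoints `u^0`, `u^a`, `v^0`, `v^a`,
and the two extra vertices `x` and `y`. -/
inductive Base (ℓ : ℕ) (U V : Set (Fin ℓ → Bool)) : Type
  | cU (c : Fin ℓ)
  | cV (c : Fin ℓ)
  | u0 (u : U)
  | ua (u : U)
  | v0 (v : V)
  | va (v : V)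
  | x
  | y

/-- Path requests of the diameter-construction graph `G(U,V,w,a)`. -/
inductive Pth (ℓ : ℕ) (U V : Set (Fin ℓ → Bool)) (w : Fin ℓ → Bool) : Type
  | upath (u : U)                                      -- u^0 … u^a, length a
  | vpath (v : V)                                      -- v^0 … v^a, length a
  | uc (u : U) (c : Fin ℓ) (h : u.1 c = true)          -- u^a — c_U, length a
  | vc (v : V) (c : Fin ℓ) (h : v.1 c = true)          -- c_V — v^0, length a
  | wc (c : Fin ℓ) (h : w c = true)                    -- edge c_U — c_V
  | xu (u : U)                                         -- x — u^a, length a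
  | yv (v : V)                                         -- y — v^0, length a

variable {ℓ : ℕ} {U V : Set (Fin ℓ → Bool)} {w : Fin ℓ → Bool}

/-- First endpoint of each path request. -/
def e0 : Pth ℓ U V w → Base ℓ U V
  | .upath u => .u0 u
  | .vpath v => .v0 v
  | .uc u _ _ => .ua u
  | .vc _ c _ => .cV c
  | .wc c _ => .cU c
  | .xu _ => .x
  | .yv _ => .y

/-- Second endpoint of each path request. -/
def e1 : Pth ℓ U V w → Base ℓ U V
  | .upath u => .ua u
  | .vpath v => .va v
  | .uc _ c _ => .cU c
  | .vc v _ _ => .v0 v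
  | .wc c _ => .cV c
  | .xu u => .ua u
  | .yv v => .v0 v

/-- Length of each path request: the `c_U — c_V` connections are single edges,
all other paths have length `a`. -/
def len (a : ℕ) : Pth ℓ U V w → ℕ
  | .wc _ _ => 1
  | _ => a

/-- The diameter-construction graph `G(U,V,w,a)`. -/
def G (a ℓ : ℕ) (U V : Set (Fin ℓ → Bool)) (w : Fin ℓ → Bool) :
    SimpleGraph (Vert (Base ℓ U V) (Pth ℓ U V w) (len a)) :=
  pathGraph e0 e1 (len a)

end DiamConstr
namespace DiamConstr

variable {B P : Type*}

/-- The `i`-th vertex along path `p`. -/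
def vtx (e0 e1 : P → B) (L : P → ℕ) (p : P) (i : ℕ) : Vert B P L :=
  if i = 0 then Sum.inl (e0 p)
  else if h : i - 1 < L p - 1 then Sum.inr ⟨p, ⟨i - 1, h⟩⟩
  else Sum.inl (e1 p)

lemma vtx_zero (e0 e1 : P → B) (L : P → ℕ) (p : P) :
    vtx e0 e1 L p 0 = Sum.inl (e0 p) := rfl

lemma vtx_top (e0 e1 : P → B) {L : P → ℕ} {p : P} (hL : 1 ≤ L p) :
    vtx e0 e1 L p (L p) = Sum.inl (e1 p) := by
  unfold vtx
  rw [if_neg (by omega), dif_neg (by omega)]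

lemma pos_vtx (e0 e1 : P → B) (L : P → ℕ) (p : P) {i : ℕ} (hi : i ≤ L p) :
    pos e0 e1 L p i (vtx e0 e1 L p i) := by
  unfold vtx pos
  rcases Nat.eq_zero_or_pos i with h0 | h0
  · subst h0; simp
  · rw [if_neg (by omega)]
    by_cases h : i - 1 < L p - 1
    · rw [dif_pos h]
      exact Or.inr (Or.inr ⟨h, h0, by omega, rfl⟩)
    · rw [dif_neg h]
      exact Or.inr (Or.inl ⟨by omega, rfl⟩)

lemma vtx_adj {e0 e1 : P → B} {L : P → ℕ} {p : P} (hne : e0 p ≠ e1 p)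
    {i : ℕ} (hi : i < L p) :
    (pathGraph e0 e1 L).Adj (vtx e0 e1 L p i) (vtx e0 e1 L p (i + 1)) := by
  have h1 : pos e0 e1 L p i (vtx e0 e1 L p i) := pos_vtx e0 e1 L p (le_of_lt hi)
  have h2 : pos e0 e1 L p (i + 1) (vtx e0 e1 L p (i + 1)) := pos_vtx e0 e1 L p hi
  show _ ∧ _
  refine ⟨?_, p, i, hi, Or.inl ⟨h1, h2⟩⟩
  unfold vtx
  rcases Nat.eq_zero_or_pos i with h0 | h0
  · subst h0
    rw [if_pos rfl, if_neg (by omega)]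
    split
    · exact fun h => by cases h
    · simp [hne]
  · rw [if_neg (by omega), if_neg (by omega),
      dif_pos (show i - 1 < L p - 1 by omega)]
    by_cases h2 : i + 1 - 1 < L p - 1
    · rw [dif_pos h2]
      intro h
      simp only [Sum.inr.injEq, Sigma.mk.inj_iff, heq_eq_eq, Fin.mk.injEq, true_and] at h
      omega
    · rw [dif_neg h2]
      exact fun h => by cases h

lemma walk_seg {e0 e1 : P → B} {L : P → ℕ} {p : P} (hne : e0 p ≠ e1 p)
    {i j : ℕ} (hij : i ≤ j) (hj : j ≤ L p) :
    ∃ W : (pathGraph e0 e1 L).Walk (vtx e0 e1 L p i) (vtx e0 e1 L p j),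
      W.length = j - i := by
  induction j with
  | zero =>
    have : i = 0 := by omega
    subst this; exact ⟨SimpleGraph.Walk.nil, rfl⟩
  | succ k ih =>
    rcases Nat.lt_or_ge i (k + 1) with h | h
    · obtain ⟨W, hW⟩ := ih (by omega) (by omega)
      exact ⟨W.concat (vtx_adj hne (by omega)), by
        rw [SimpleGraph.Walk.length_concat, hW]; omega⟩
    · have : i = k + 1 := by omega
      subst this; exact ⟨SimpleGraph.Walk.nil, by simp⟩

lemma walk_to_e1 {e0 e1 : P → B} {L : P → ℕ} {p : P} (hne : e0 p ≠ e1 p)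
    {i : ℕ} (hi : i ≤ L p) (hL : 1 ≤ L p) :
    ∃ W : (pathGraph e0 e1 L).Walk (vtx e0 e1 L p i) (Sum.inl (e1 p)),
      W.length ≤ L p := by
  obtain ⟨W, hW⟩ := walk_seg hne hi (le_refl (L p))
  exact ⟨W.copy rfl (vtx_top _ _ hL), by rw [SimpleGraph.Walk.length_copy, hW]; omega⟩

lemma walk_to_e0 {e0 e1 : P → B} {L : P → ℕ} {p : P} (hne : e0 p ≠ e1 p)
    {i : ℕ} (hi : i ≤ L p) :
    ∃ W : (pathGraph e0 e1 L).Walk (vtx e0 e1 L p i) (Sum.inl (e0 p)),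
      W.length ≤ L p := by
  obtain ⟨W, hW⟩ := walk_seg hne (Nat.zero_le i) hi
  exact ⟨W.reverse.copy rfl (vtx_zero _ _ _ _), by
    rw [SimpleGraph.Walk.length_copy, SimpleGraph.Walk.length_reverse, hW]; omega⟩

variable {ℓ : ℕ} {U V : Set (Fin ℓ → Bool)} {w : Fin ℓ → Bool}

lemma e0_ne_e1 (p : Pth ℓ U V w) : e0 p ≠ e1 p := by
  cases p <;> simp [e0, e1]

lemma len_pos {a : ℕ} (ha : 0 < a) (p : Pth ℓ U V w) : 1 ≤ len a p := by
  cases p <;> simp [len] <;> omega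

lemma endWalk {a : ℕ} (ha : 0 < a) (p : Pth ℓ U V w) :
    ∃ W : (G a ℓ U V w).Walk (Sum.inl (e0 p)) (Sum.inl (e1 p)), W.length = len a p := by
  obtain ⟨W, hW⟩ := walk_seg (L := len a) (e0_ne_e1 p) (Nat.zero_le _) (le_refl (len a p))
  exact ⟨W.copy (vtx_zero _ _ _ _) (vtx_top _ _ (len_pos ha p)), by
    exact (W.length_copy _ _).trans (by omega)⟩


lemma inr_eq_vtx {e0 : P → B} {e1 : P → B} {L : P → ℕ} {p : P} (k : Fin (L p - 1)) :
    (Sum.inr ⟨p, k⟩ : Vert B P L) = vtx e0 e1 L p (k.1 + 1) := by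
  unfold vtx
  rw [if_neg (by omega), dif_pos (show k.1 + 1 - 1 < L p - 1 by have := k.isLt; omega)]
  simp

lemma toHub {a : ℕ} (ha : 0 < a) (hU : U.Nonempty) (hV : V.Nonempty)
    (hUcov : ∀ c : Fin ℓ, ∃ u ∈ U, u c = true)
    (hVcov : ∀ c : Fin ℓ, ∃ v ∈ V, v c = true)
    (z : Vert (Base ℓ U V) (Pth ℓ U V w) (len a)) :
    (∃ u : U, ∃ W : (G a ℓ U V w).Walk z (Sum.inl (.ua u)), W.length ≤ a) ∨
    (∃ v : V, ∃ W : (G a ℓ U V w).Walk z (Sum.inl (.v0 v)), W.length ≤ a) := by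
  obtain b | ⟨p, k⟩ := z
  · cases b with
    | cU c =>
      obtain ⟨u, hu, huc⟩ := hUcov c
      obtain ⟨W, hW⟩ := endWalk ha (Pth.uc (U := U) (V := V) (w := w) ⟨u, hu⟩ c huc)
      exact Or.inl ⟨⟨u, hu⟩, W.reverse, by
        exact (le_of_eq ((SimpleGraph.Walk.length_reverse W).trans hW)).trans (by simp [len])⟩
    | cV c =>
      obtain ⟨v, hv, hvc⟩ := hVcov c
      obtain ⟨W, hW⟩ := endWalk ha (Pth.vc (U := U) (V := V) (w := w) ⟨v, hv⟩ c hvc)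
      exact Or.inr ⟨⟨v, hv⟩, W, by exact (le_of_eq hW).trans (by simp [len])⟩
    | u0 u =>
      obtain ⟨W, hW⟩ := endWalk ha (Pth.upath (U := U) (V := V) (w := w) u)
      exact Or.inl ⟨u, W, by exact (le_of_eq hW).trans (by simp [len])⟩
    | ua u => exact Or.inl ⟨u, SimpleGraph.Walk.nil, by simp⟩
    | v0 v => exact Or.inr ⟨v, SimpleGraph.Walk.nil, by simp⟩
    | va v =>
      obtain ⟨W, hW⟩ := endWalk ha (Pth.vpath (U := U) (V := V) (w := w) v)
      exact Or.inr ⟨v, W.reverse, by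
        exact (le_of_eq ((SimpleGraph.Walk.length_reverse W).trans hW)).trans (by simp [len])⟩
    | x =>
      obtain ⟨u, hu⟩ := hU
      obtain ⟨W, hW⟩ := endWalk ha (Pth.xu (U := U) (V := V) (w := w) ⟨u, hu⟩)
      exact Or.inl ⟨⟨u, hu⟩, W, by exact (le_of_eq hW).trans (by simp [len])⟩
    | y =>
      obtain ⟨v, hv⟩ := hV
      obtain ⟨W, hW⟩ := endWalk ha (Pth.yv (U := U) (V := V) (w := w) ⟨v, hv⟩)
      exact Or.inr ⟨⟨v, hv⟩, W, by exact (le_of_eq hW).trans (by simp [len])⟩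
  · have hk := k.isLt
    rw [inr_eq_vtx (e0 := e0) (e1 := e1) k]
    cases p with
    | wc c h => simp [len] at hk
    | upath u =>
      obtain ⟨W, hW⟩ := walk_to_e1 (L := len a) (e0_ne_e1 (Pth.upath u)) (i := k.1 + 1)
        (by simp [len] at hk ⊢; omega) (len_pos ha _)
      exact Or.inl ⟨u, W, hW.trans (by simp [len])⟩
    | vpath v =>
      obtain ⟨W, hW⟩ := walk_to_e0 (L := len a) (e0_ne_e1 (Pth.vpath v)) (i := k.1 + 1)
        (by simp [len] at hk ⊢; omega)
      exact Or.inr ⟨v, W, hW.trans (by simp [len])⟩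
    | uc u c h =>
      obtain ⟨W, hW⟩ := walk_to_e0 (L := len a) (e0_ne_e1 (Pth.uc u c h)) (i := k.1 + 1)
        (by simp [len] at hk ⊢; omega)
      exact Or.inl ⟨u, W, hW.trans (by simp [len])⟩
    | vc v c h =>
      obtain ⟨W, hW⟩ := walk_to_e1 (L := len a) (e0_ne_e1 (Pth.vc v c h)) (i := k.1 + 1)
        (by simp [len] at hk ⊢; omega) (len_pos ha _)
      exact Or.inr ⟨v, W, hW.trans (by simp [len])⟩
    | xu u =>
      obtain ⟨W, hW⟩ := walk_to_e1 (L := len a) (e0_ne_e1 (Pth.xu u)) (i := k.1 + 1)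
        (by simp [len] at hk ⊢; omega) (len_pos ha _)
      exact Or.inl ⟨u, W, hW.trans (by simp [len])⟩
    | yv v =>
      obtain ⟨W, hW⟩ := walk_to_e1 (L := len a) (e0_ne_e1 (Pth.yv v)) (i := k.1 + 1)
        (by simp [len] at hk ⊢; omega) (len_pos ha _)
      exact Or.inr ⟨v, W, hW.trans (by simp [len])⟩

lemma uHub_walk {a : ℕ} (ha : 0 < a) (u u' : U) :
    ∃ M : (G a ℓ U V w).Walk (Sum.inl (.ua u)) (Sum.inl (.ua u')),
      M.length ≤ 2 * a + 1 := by
  obtain ⟨M1, hM1⟩ := endWalk ha (Pth.xu (U := U) (V := V) (w := w) u)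
  obtain ⟨M2, hM2⟩ := endWalk ha (Pth.xu (U := U) (V := V) (w := w) u')
  exact ⟨M1.reverse.append M2, by
    have e := SimpleGraph.Walk.length_append M1.reverse M2
    have e2 := SimpleGraph.Walk.length_reverse M1
    exact e.trans_le ((congrArg₂ (· + ·) (e2.trans hM1) hM2).le.trans (by show a + a ≤ 2 * a + 1; omega))⟩

lemma vHub_walk {a : ℕ} (ha : 0 < a) (v v' : V) :
    ∃ M : (G a ℓ U V w).Walk (Sum.inl (.v0 v)) (Sum.inl (.v0 v')),
      M.length ≤ 2 * a + 1 := by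
  obtain ⟨M1, hM1⟩ := endWalk ha (Pth.yv (U := U) (V := V) (w := w) v)
  obtain ⟨M2, hM2⟩ := endWalk ha (Pth.yv (U := U) (V := V) (w := w) v')
  exact ⟨M1.reverse.append M2, by
    have e := SimpleGraph.Walk.length_append M1.reverse M2
    have e2 := SimpleGraph.Walk.length_reverse M1
    exact e.trans_le ((congrArg₂ (· + ·) (e2.trans hM1) hM2).le.trans (by show a + a ≤ 2 * a + 1; omega))⟩

lemma uvHub_walk {a : ℕ} (ha : 0 < a)
    (hyes : ∀ u ∈ U, ∀ v ∈ V, ∃ c, u c = true ∧ v c = true ∧ w c = true)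
    (u : U) (v : V) :
    ∃ M : (G a ℓ U V w).Walk (Sum.inl (.ua u)) (Sum.inl (.v0 v)),
      M.length ≤ 2 * a + 1 := by
  obtain ⟨c, hc1, hc2, hc3⟩ := hyes u.1 u.2 v.1 v.2
  obtain ⟨M1, hM1⟩ := endWalk ha (Pth.uc (U := U) (V := V) (w := w) u c hc1)
  obtain ⟨M2, hM2⟩ := endWalk ha (Pth.wc (U := U) (V := V) (w := w) c hc3)
  obtain ⟨M3, hM3⟩ := endWalk ha (Pth.vc (U := U) (V := V) (w := w) v c hc2)
  exact ⟨M1.append (M2.append M3), by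
    have e := SimpleGraph.Walk.length_append M1 (M2.append M3)
    have e' := SimpleGraph.Walk.length_append M2 M3
    exact e.trans_le ((congrArg₂ (· + ·) hM1 (e'.trans (congrArg₂ (· + ·) hM2 hM3))).le.trans
      (by show a + (1 + a) ≤ 2 * a + 1; omega))⟩

end DiamConstr

open DiamConstr in
theorem diameter_construction_yes_case
    (a ℓ : ℕ) (ha : 0 < a) (hℓ : 0 < ℓ)
    (U V : Set (Fin ℓ → Bool)) (hUfin : U.Finite) (hVfin : V.Finite)
    (hU : U.Nonempty) (hV : V.Nonempty) (w : Fin ℓ → Bool)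
    (hUone : ∀ u ∈ U, ∃ c, u c = true) (hVone : ∀ v ∈ V, ∃ c, v c = true)
    (hUcov : ∀ c : Fin ℓ, ∃ u ∈ U, u c = true)
    (hVcov : ∀ c : Fin ℓ, ∃ v ∈ V, v c = true)
    (hyes : ∀ u ∈ U, ∀ v ∈ V, ∃ c, u c = true ∧ v c = true ∧ w c = true) :
    ∀ y z : Vert (Base ℓ U V) (Pth ℓ U V w) (len a),
      ∃ p : (G a ℓ U V w).Walk y z, p.length ≤ 4 * a + 1 := by
  intro y z
  have hy := toHub ha hU hV hUcov hVcov y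
  have hz := toHub ha hU hV hUcov hVcov z
  rcases hy with ⟨u, Wy, hWy⟩ | ⟨v, Wy, hWy⟩ <;>
    rcases hz with ⟨u', Wz, hWz⟩ | ⟨v', Wz, hWz⟩
  · obtain ⟨M, hM⟩ := uHub_walk (w := w) ha u u'
    exact ⟨Wy.append (M.append Wz.reverse), by
      simp [SimpleGraph.Walk.length_append, SimpleGraph.Walk.length_reverse]; omega⟩
  · obtain ⟨M, hM⟩ := uvHub_walk ha hyes u v'
    exact ⟨Wy.append (M.append Wz.reverse), by
      simp [SimpleGraph.Walk.length_append, SimpleGraph.Walk.length_reverse]; omega⟩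
  · obtain ⟨M, hM⟩ := uvHub_walk ha hyes u' v
    exact ⟨Wy.append (M.reverse.append Wz.reverse), by
      simp [SimpleGraph.Walk.length_append, SimpleGraph.Walk.length_reverse]; omega⟩
  · obtain ⟨M, hM⟩ := vHub_walk (w := w) (U := U) ha v v'
    exact ⟨Wy.append (M.append Wz.reverse), by
      simp [SimpleGraph.Walk.length_append, SimpleGraph.Walk.length_reverse]; omega⟩
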